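/- arXiv:2409.19087 — 2 statements merged into one kernel-verified Lean document; each statement's English description precedes it below -/
import Mathlib

section
/- Let k, m, n be positive integers with k dividing m, k < m, and n ≥ 2. Define the m×n matrix A by: A_{j,1} = 1/√k for 1 ≤ j ≤ k and A_{j,1} = 0 for k < j ≤ m; and A_{j,i} = 1/√m for every i with 2 ≤ i ≤ n and every j ∈ [m]. Then A has rank 2 and A is m/(2k)-incoherent (the coherence of its column space equals m/(2k)). -/
open scoped BigOperators
open scoped RealInnerProductSpace

private lemma sum_ite_fin {m k : ℕ} (hkm : k ≤ m) (a b : ℝ) :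
    ∑ j : Fin m, (if (j:ℕ) < k then a else b) = k * a + (m - k : ℕ) * b := by
  rw [Fin.sum_univ_eq_sum_range (fun j => if j < k then a else b),
      ← Finset.sum_range_add_sum_Ico _ hkm]
  rw [Finset.sum_congr rfl (fun j hj => if_pos (Finset.mem_range.mp hj)),
      Finset.sum_congr rfl (fun j hj => if_neg (not_lt.mpr (Finset.mem_Ico.mp hj).1))]
  simp [mul_comm]

/-- The coherence `μ(U)` of a subspace `U` of `ℝ^m`:
`μ(U) = (m / dim U) · max_{j ∈ [m]} ‖P_U e_j‖₂²`. -/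
noncomputable def coherence {m : ℕ} (U : Submodule ℝ (EuclideanSpace ℝ (Fin m))) : ℝ :=
  ((m : ℝ) / (Module.finrank ℝ U : ℝ)) *
    ⨆ j : Fin m,
      ‖(U.orthogonalProjectionOnto (EuclideanSpace.single j 1) : EuclideanSpace ℝ (Fin m))‖ ^ 2

/-- The column space of an `m × n` real matrix, as a subspace of `ℝ^m`. -/
noncomputable def colSpace {m n : ℕ} (A : Matrix (Fin m) (Fin n) ℝ) :
    Submodule ℝ (EuclideanSpace ℝ (Fin m)) :=
  Submodule.span ℝ (Set.range fun i : Fin n => (EuclideanSpace.equiv (Fin m) ℝ).symm fun j => A j i)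

/-- **Lemma 3.2.** Let `k ∣ m`, `k < m`, `n ≥ 2`. The `m × n` matrix whose first column is
`1/√k` on the first `k` rows and `0` elsewhere, and whose remaining `n − 1` columns are the
uniform vector `1/√m`, has rank `2` and its column space has coherence exactly `m/(2k)`
(it is `m/(2k)`-incoherent). -/
theorem two_center_matrix_rank_and_incoherence {k m n : ℕ}
    (hk : 0 < k) (hdvd : k ∣ m) (hkm : k < m) (hn : 2 ≤ n)
    (A : Matrix (Fin m) (Fin n) ℝ)
    (hA1 : ∀ (j : Fin m) (i : Fin n), (i : ℕ) = 0 →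
      A j i = if (j : ℕ) < k then 1 / Real.sqrt k else 0)
    (hA2 : ∀ (j : Fin m) (i : Fin n), (i : ℕ) ≠ 0 → A j i = 1 / Real.sqrt m) :
    A.rank = 2 ∧ coherence (colSpace A) = (m : ℝ) / (2 * k) := by
  have hm0 : 0 < m := hk.trans hkm
  have h2k : 2 * k ≤ m := by
    obtain ⟨c, rfl⟩ := hdvd
    have hc : 2 ≤ c := by nlinarith
    calc 2 * k = k * 2 := by ring
    _ ≤ k * c := Nat.mul_le_mul_left k hc
  have hkR : (0:ℝ) < (k:ℝ) := by exact_mod_cast hk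
  have hmR : (0:ℝ) < (m:ℝ) := by exact_mod_cast hm0
  have hmkR : (0:ℝ) < (m:ℝ) - k := by
    have : (k:ℝ) < m := by exact_mod_cast hkm
    linarith
  have hsk : (0:ℝ) < Real.sqrt k := Real.sqrt_pos.mpr hkR
  have hsm : (0:ℝ) < Real.sqrt m := Real.sqrt_pos.mpr hmR
  have hsmk : (0:ℝ) < Real.sqrt ((m:ℝ) - k) := Real.sqrt_pos.mpr hmkR
  -- the three key vectors
  set u : EuclideanSpace ℝ (Fin m) :=
    (EuclideanSpace.equiv (Fin m) ℝ).symm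
      (fun j : Fin m => if (j:ℕ) < k then 1 / Real.sqrt k else 0) with hu_def
  set w : EuclideanSpace ℝ (Fin m) :=
    (EuclideanSpace.equiv (Fin m) ℝ).symm
      (fun j : Fin m => if (j:ℕ) < k then 0 else 1 / Real.sqrt ((m:ℝ) - k)) with hw_def
  set v : EuclideanSpace ℝ (Fin m) :=
    (EuclideanSpace.equiv (Fin m) ℝ).symm (fun _ : Fin m => 1 / Real.sqrt m) with hv_def
  have hu_app : ∀ j : Fin m, u j = if (j:ℕ) < k then 1 / Real.sqrt k else 0 := fun _ => rfl
  have hw_app : ∀ j : Fin m, w j = if (j:ℕ) < k then 0 else 1 / Real.sqrt ((m:ℝ) - k) :=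
    fun _ => rfl
  have hv_app : ∀ j : Fin m, v j = 1 / Real.sqrt m := fun _ => rfl
  have innE : ∀ x y : EuclideanSpace ℝ (Fin m), ⟪x, y⟫ = ∑ j, x j * y j := by
    intro x y; simp [PiLp.inner_apply, RCLike.inner_apply]; exact Finset.sum_congr rfl (fun _ _ => mul_comm _ _)
  -- inner products
  have hsksk : (Real.sqrt k)⁻¹ * (Real.sqrt k)⁻¹ = (k:ℝ)⁻¹ := by
    rw [← mul_inv, Real.mul_self_sqrt hkR.le]
  have hsmksmk : (Real.sqrt ((m:ℝ) - k))⁻¹ * (Real.sqrt ((m:ℝ) - k))⁻¹ = ((m:ℝ) - k)⁻¹ := by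
    rw [← mul_inv, Real.mul_self_sqrt hmkR.le]
  have huu : ⟪u, u⟫ = 1 := by
    rw [innE]
    have : ∀ j : Fin m, u j * u j = if (j:ℕ) < k then (k:ℝ)⁻¹ else 0 := by
      intro j; rw [hu_app]; by_cases h : (j:ℕ) < k <;> simp [h, hsksk]
    rw [Finset.sum_congr rfl (fun j _ => this j), sum_ite_fin hkm.le]
    field_simp
    simp
  have hww : ⟪w, w⟫ = 1 := by
    rw [innE]
    have : ∀ j : Fin m, w j * w j = if (j:ℕ) < k then 0 else ((m:ℝ) - k)⁻¹ := by
      intro j; rw [hw_app]; by_cases h : (j:ℕ) < k <;> simp [h, hsmksmk]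
    rw [Finset.sum_congr rfl (fun j _ => this j), sum_ite_fin hkm.le]
    rw [Nat.cast_sub hkm.le]
    field_simp
    simp
  have huw : ⟪u, w⟫ = 0 := by
    rw [innE]
    apply Finset.sum_eq_zero
    intro j _
    rw [hu_app, hw_app]
    by_cases h : (j:ℕ) < k <;> simp [h]
  have hwu : ⟪w, u⟫ = 0 := by rw [real_inner_comm]; exact huw
  -- v is a combination of u and w, and conversely
  have hv_comb : v = (Real.sqrt k / Real.sqrt m) • u + (Real.sqrt ((m:ℝ) - k) / Real.sqrt m) • w := by
    ext j
    rw [PiLp.add_apply, PiLp.smul_apply, PiLp.smul_apply, hu_app, hw_app, hv_app]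
    by_cases h : (j:ℕ) < k <;> simp only [h, if_true, if_false, smul_eq_mul] <;> field_simp <;> ring
  have hw_comb : w = (Real.sqrt m / Real.sqrt ((m:ℝ) - k)) • v
      - (Real.sqrt k / Real.sqrt ((m:ℝ) - k)) • u := by
    ext j
    rw [PiLp.sub_apply, PiLp.smul_apply, PiLp.smul_apply, hu_app, hw_app, hv_app]
    by_cases h : (j:ℕ) < k <;> simp only [h, if_true, if_false, smul_eq_mul] <;> field_simp <;> ring
  -- identify the columns
  set g : Fin n → EuclideanSpace ℝ (Fin m) :=
    fun i : Fin n => (EuclideanSpace.equiv (Fin m) ℝ).symm fun j => A j i with hg_def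
  have hcolA : colSpace A = Submodule.span ℝ (Set.range g) := rfl
  set i0 : Fin n := ⟨0, by omega⟩ with hi0
  set i1 : Fin n := ⟨1, by omega⟩ with hi1
  have hg0 : g i0 = u := by
    ext j
    show A j i0 = u j
    rw [hA1 j i0 rfl, hu_app]
  have hgi : ∀ i : Fin n, (i:ℕ) ≠ 0 → g i = v := by
    intro i hi
    ext j
    show A j i = v j
    rw [hA2 j i hi, hv_app]
  -- the column space is span {u, w}
  have hU : colSpace A = Submodule.span ℝ {u, w} := by
    rw [hcolA]
    apply le_antisymm
    · rw [Submodule.span_le]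
      rintro x ⟨i, rfl⟩
      by_cases hi : (i:ℕ) = 0
      · have : i = i0 := Fin.ext hi
        rw [this, hg0]
        exact Submodule.subset_span (Set.mem_insert _ _)
      · rw [hgi i hi, hv_comb]
        exact Submodule.add_mem _
          (Submodule.smul_mem _ _ (Submodule.subset_span (Set.mem_insert _ _)))
          (Submodule.smul_mem _ _ (Submodule.subset_span (Set.mem_insert_of_mem _ rfl)))
    · rw [Submodule.span_le]
      rintro x hx
      rcases hx with rfl | hx
      · exact Submodule.subset_span ⟨i0, hg0⟩
      · rcases hx with rfl
        rw [hw_comb]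
        have hv_mem : v ∈ Submodule.span ℝ (Set.range g) := by
          apply Submodule.subset_span
          exact ⟨i1, hgi i1 (by simp [hi1])⟩
        have hu_mem : u ∈ Submodule.span ℝ (Set.range g) :=
          Submodule.subset_span ⟨i0, hg0⟩
        exact Submodule.sub_mem _ (Submodule.smul_mem _ _ hv_mem)
          (Submodule.smul_mem _ _ hu_mem)
  -- orthonormality and rank
  have hortho : Orthonormal ℝ ![u, w] := by
    rw [orthonormal_iff_ite]
    intro i j
    fin_cases i <;> fin_cases j <;>
      simp [huu, hww, huw, hwu,
        (by rw [norm_eq_sqrt_real_inner, huu, Real.sqrt_one] : ‖u‖ = 1),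
        (by rw [norm_eq_sqrt_real_inner, hww, Real.sqrt_one] : ‖w‖ = 1)]
  have hrange2 : Set.range ![u, w] = {u, w} := by
    ext x
    simp [Fin.exists_fin_two, or_comm]
  have hfin : Module.finrank ℝ (colSpace A) = 2 := by
    rw [hU, ← hrange2, finrank_span_eq_card hortho.linearIndependent]
    simp
  constructor
  · -- rank
    rw [Matrix.rank_eq_finrank_span_cols, show A.col = A.transpose from rfl]
    have hmap : Submodule.span ℝ (Set.range A.transpose) =
        Submodule.map ((EuclideanSpace.equiv (Fin m) ℝ).toLinearEquiv :
          EuclideanSpace ℝ (Fin m) →ₗ[ℝ] (Fin m → ℝ)) (colSpace A) := by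
      have hcomp : (⇑((EuclideanSpace.equiv (Fin m) ℝ).toLinearEquiv :
          EuclideanSpace ℝ (Fin m) →ₗ[ℝ] (Fin m → ℝ))) ∘ g = A.transpose := by
        funext i j
        rfl
      rw [hcolA, Submodule.map_span, ← Set.range_comp, hcomp]
    rw [hmap]
    rw [LinearEquiv.finrank_map_eq (EuclideanSpace.equiv (Fin m) ℝ).toLinearEquiv (colSpace A)]
    exact hfin
  · -- coherence
    have hP : ∀ j : Fin m,
        ((colSpace A).orthogonalProjectionOnto (EuclideanSpace.single j 1)
          : EuclideanSpace ℝ (Fin m)) = u j • u + w j • w := by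
      intro j
      apply Submodule.eq_starProjection_of_mem_of_inner_eq_zero
      · rw [hU]
        exact Submodule.add_mem _
          (Submodule.smul_mem _ _ (Submodule.subset_span (Set.mem_insert _ _)))
          (Submodule.smul_mem _ _ (Submodule.subset_span (Set.mem_insert_of_mem _ rfl)))
      · intro y hy
        rw [hU] at hy
        have key : ∀ x ∈ ({u, w} : Set (EuclideanSpace ℝ (Fin m))),
            ⟪EuclideanSpace.single j 1 - (u j • u + w j • w), x⟫ = 0 := by
          intro x hx
          rcases Set.mem_insert_iff.mp hx with rfl | hx
          · rw [inner_sub_left, inner_add_left, real_inner_smul_left, real_inner_smul_left,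
              huu, hwu, EuclideanSpace.inner_single_left]
            simp
          · rcases Set.mem_singleton_iff.mp hx with rfl
            rw [inner_sub_left, inner_add_left, real_inner_smul_left, real_inner_smul_left,
              hww, huw, EuclideanSpace.inner_single_left]
            simp
        induction hy using Submodule.span_induction with
        | mem x hx => exact key x hx
        | zero => simp
        | add x y _ _ hx hy => rw [inner_add_right, hx, hy, add_zero]
        | smul a x _ hx => rw [real_inner_smul_right, hx, mul_zero]
    have hnorm : ∀ j : Fin m,
        ‖((colSpace A).orthogonalProjectionOnto (EuclideanSpace.single j 1)
          : EuclideanSpace ℝ (Fin m))‖ ^ 2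
        = if (j:ℕ) < k then (k:ℝ)⁻¹ else ((m:ℝ) - k)⁻¹ := by
      intro j
      rw [← real_inner_self_eq_norm_sq, hP j]
      rw [inner_add_left, inner_add_right, inner_add_right,
        real_inner_smul_left, real_inner_smul_left, real_inner_smul_left, real_inner_smul_left,
        real_inner_smul_right, real_inner_smul_right, real_inner_smul_right,
        real_inner_smul_right, huu, hww, huw, hwu]
      rw [hu_app, hw_app]
      by_cases h : (j:ℕ) < k <;> simp [h, hsksk, hsmksmk]
    have hsup : (⨆ j : Fin m,
        ‖((colSpace A).orthogonalProjectionOnto (EuclideanSpace.single j 1)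
          : EuclideanSpace ℝ (Fin m))‖ ^ 2) = (k:ℝ)⁻¹ := by
      have hne : Nonempty (Fin m) := ⟨⟨0, hm0⟩⟩
      apply le_antisymm
      · apply ciSup_le
        intro j
        rw [hnorm j]
        split
        · exact le_refl _
        · have : (k:ℝ) ≤ (m:ℝ) - k := by
            have : (2*k : ℝ) ≤ m := by exact_mod_cast h2k
            push_cast at this ⊢
            linarith
          gcongr
      · have hb : BddAbove (Set.range fun j : Fin m =>
            ‖((colSpace A).orthogonalProjectionOnto (EuclideanSpace.single j 1)
              : EuclideanSpace ℝ (Fin m))‖ ^ 2) :=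
          Set.Finite.bddAbove (Set.finite_range _)
        have := le_ciSup hb ⟨0, hm0⟩
        rwa [hnorm ⟨0, hm0⟩, if_pos hk] at this
    unfold coherence
    rw [hfin, hsup]
    push_cast
    field_simp
    all_goals ring
end

section
/- Let A be an m×n valuation matrix of rank r that is μ0-incoherent, with unit-norm nonnegative columns, and fix p ≤ 1 with p ≠ 0. Let y^equal be the equal-split allocation given by y^equal_{j,i} = 1/n for all j ∈ [m], i ∈ [n]. Then every individual satisfies u_i(y^equal) ≥ √m / (n·√(μ0·r)), and consequently GMW_p(y^equal) ≥ √m / (n·√(μ0·r)). -/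
open scoped BigOperators

/-- An allocation is feasible if all fractions are nonnegative and each item is
allocated at most once in total. -/
def Feasible {m n : ℕ} (y : Fin m → Fin n → ℝ) : Prop :=
  (∀ j i, 0 ≤ y j i) ∧ ∀ j, ∑ i, y j i ≤ 1

/-- The (additive) utility of individual `i` under allocation `y`:
`u_i(y) = Σ_j A_{j,i} · y_{j,i}`. -/
noncomputable def util {m n : ℕ} (A : Matrix (Fin m) (Fin n) ℝ)
    (y : Fin m → Fin n → ℝ) (i : Fin n) : ℝ :=
  ∑ j, A j i * y j i

/-- The generalized `p`-mean welfare `GMW_p(y) = ((1/n) Σᵢ uᵢ(y)^p)^{1/p}`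
(real powers). -/
noncomputable def GMW {m n : ℕ} (p : ℝ) (A : Matrix (Fin m) (Fin n) ℝ)
    (y : Fin m → Fin n → ℝ) : ℝ :=
  ((1 / (n : ℝ)) * ∑ i, util A y i ^ p) ^ (1 / p)

/-- For a rank-`r`, `μ0`-incoherent valuation matrix with nonnegative unit-norm columns and any
`p ≤ 1`, `p ≠ 0`, under the equal-split allocation `y^equal_{j,i} = 1/n` every individual gets
utility at least `√m/(n·√(μ0·r))`, and hence `GMW_p(y^equal) ≥ √m/(n·√(μ0·r))`. -/
theorem equal_split_lower_bound {m n : ℕ} (hm : 0 < m) (hn : 0 < n) (r : ℕ) (μ0 : ℝ)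
    (A : Matrix (Fin m) (Fin n) ℝ)
    (hA0 : ∀ j i, 0 ≤ A j i) (hnorm : ∀ i, ∑ j, (A j i) ^ 2 = 1)
    (hrank : A.rank = r) (hinc : coherence (colSpace A) ≤ μ0)
    (p : ℝ) (hp1 : p ≤ 1) (hp0 : p ≠ 0) :
    (∀ i : Fin n,
      Real.sqrt m / ((n : ℝ) * Real.sqrt (μ0 * r)) ≤ util A (fun _ _ => 1 / (n : ℝ)) i) ∧
    Real.sqrt m / ((n : ℝ) * Real.sqrt (μ0 * r)) ≤ GMW p A (fun _ _ => 1 / (n : ℝ)) := by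
  classical
  haveI : Nonempty (Fin n) := ⟨⟨0, hn⟩⟩
  have hn' : (0 : ℝ) < n := by exact_mod_cast hn
  have hm' : (0 : ℝ) < m := by exact_mod_cast hm
  have hutil0 : ∀ i, 0 ≤ util A (fun _ _ => 1 / (n : ℝ)) i := fun i =>
    Finset.sum_nonneg fun j _ => mul_nonneg (hA0 j i) (by positivity)
  by_cases hpos : 0 < μ0 * r
  · -- main case
    have hr : 0 < r := by
      rcases Nat.eq_zero_or_pos r with h | h
      · simp [h] at hpos
      · exact h
    have hr' : (0 : ℝ) < r := by exact_mod_cast hr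
    have hμ : 0 < μ0 := by nlinarith
    -- finrank of column space
    have hfr : (Module.finrank ℝ (colSpace A) : ℝ) = r := by
      have : Module.finrank ℝ (colSpace A) = A.rank := by
        rw [Matrix.rank_eq_finrank_span_cols, ← LinearEquiv.finrank_map_eq
          (EuclideanSpace.equiv (Fin m) ℝ).toLinearEquiv, colSpace, Submodule.map_span,
          ← Set.range_comp]
        rfl
      rw [this, hrank]
    -- bound on projections
    have hSle : (⨆ j : Fin m,
        ‖((colSpace A).orthogonalProjectionOnto (EuclideanSpace.single j 1) :
          EuclideanSpace ℝ (Fin m))‖ ^ 2) ≤ μ0 * r / m := by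
      have h1 := hinc
      rw [coherence, hfr] at h1
      have h2 : (m : ℝ) * (⨆ j : Fin m,
          ‖((colSpace A).orthogonalProjectionOnto (EuclideanSpace.single j 1) :
            EuclideanSpace ℝ (Fin m))‖ ^ 2) ≤ μ0 * r := by
        rw [div_mul_eq_mul_div, div_le_iff₀ hr'] at h1; exact h1
      rw [le_div_iff₀ hm', mul_comm]; exact h2
    have hProj : ∀ j : Fin m,
        ‖((colSpace A).orthogonalProjectionOnto (EuclideanSpace.single j 1) :
            EuclideanSpace ℝ (Fin m))‖ ^ 2 ≤ μ0 * r / m := by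
      intro j
      exact le_trans (le_ciSup (f := fun j : Fin m =>
        ‖((colSpace A).orthogonalProjectionOnto (EuclideanSpace.single j 1) :
          EuclideanSpace ℝ (Fin m))‖ ^ 2)
        (Set.Finite.bddAbove (Set.finite_range _)) j) hSle
    -- entrywise bound
    set t := Real.sqrt (μ0 * r / m) with ht
    have htpos : 0 < t := Real.sqrt_pos.mpr (by positivity)
    have hAle : ∀ j i, A j i ≤ t := by
      intro j i
      set v : EuclideanSpace ℝ (Fin m) :=
        (EuclideanSpace.equiv (Fin m) ℝ).symm fun j' => A j' i with hv
      have hvmem : v ∈ colSpace A := Submodule.subset_span ⟨i, rfl⟩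
      have hvnorm : ‖v‖ = 1 := by
        rw [EuclideanSpace.norm_eq]
        have : ∀ j' : Fin m, ‖v j'‖ ^ 2 = (A j' i) ^ 2 := fun j' => by
          rw [Real.norm_eq_abs, sq_abs]; rfl
        rw [Finset.sum_congr rfl fun j' _ => this j', hnorm i, Real.sqrt_one]
      have hinner : A j i =
          inner ℝ (((colSpace A).orthogonalProjectionOnto (EuclideanSpace.single j 1) :
            EuclideanSpace ℝ (Fin m))) v := by
        have := Submodule.inner_orthogonalProjectionOnto_eq_of_mem_right (K := colSpace A)
          (⟨v, hvmem⟩ : colSpace A) (EuclideanSpace.single j (1 : ℝ))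
        have h2 : (inner ℝ (EuclideanSpace.single j (1 : ℝ)) v : ℝ) = A j i := by
          rw [EuclideanSpace.inner_single_left]; simp; rfl
        rw [← h2]
        exact this.symm
      calc A j i = _ := hinner
        _ ≤ ‖((colSpace A).orthogonalProjectionOnto (EuclideanSpace.single j 1) :
            EuclideanSpace ℝ (Fin m))‖ * ‖v‖ := real_inner_le_norm _ _
        _ = ‖((colSpace A).orthogonalProjectionOnto (EuclideanSpace.single j 1) :
            EuclideanSpace ℝ (Fin m))‖ := by rw [hvnorm, mul_one]
        _ ≤ t := by
          rw [← Real.sqrt_sq (norm_nonneg _)]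
          exact Real.sqrt_le_sqrt (hProj j)
    -- column sum lower bound
    have hsum : ∀ i, 1 / t ≤ ∑ j, A j i := by
      intro i
      have h1 : (1 : ℝ) ≤ t * ∑ j, A j i := by
        calc (1 : ℝ) = ∑ j, (A j i) ^ 2 := (hnorm i).symm
          _ ≤ ∑ j, t * A j i := Finset.sum_le_sum fun j _ => by
              rw [sq]; exact mul_le_mul_of_nonneg_right (hAle j i) (hA0 j i)
          _ = t * ∑ j, A j i := by rw [Finset.mul_sum]
      rw [div_le_iff₀ htpos]
      linarith [mul_comm t (∑ j, A j i)]
    have h1t : 1 / t = Real.sqrt m / Real.sqrt (μ0 * r) := by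
      rw [ht, Real.sqrt_div (by positivity) m, one_div_div]
    have hcpos : 0 < Real.sqrt m / ((n : ℝ) * Real.sqrt (μ0 * r)) := by
      have h1 : 0 < Real.sqrt m := Real.sqrt_pos.mpr hm'
      have h2 : 0 < Real.sqrt (μ0 * r) := Real.sqrt_pos.mpr hpos
      positivity
    have hkey : ∀ i, Real.sqrt m / ((n : ℝ) * Real.sqrt (μ0 * r)) ≤
        util A (fun _ _ => 1 / (n : ℝ)) i := by
      intro i
      have h2 : util A (fun _ _ => 1 / (n : ℝ)) i = (∑ j, A j i) * (1 / n) := by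
        rw [util, ← Finset.sum_mul]
      have hce : Real.sqrt m / ((n : ℝ) * Real.sqrt (μ0 * r)) = (1 / t) * (1 / n) := by
        rw [h1t]; ring
      rw [h2, hce]
      exact mul_le_mul_of_nonneg_right (hsum i) (by positivity)
    set c := Real.sqrt m / ((n : ℝ) * Real.sqrt (μ0 * r)) with hc
    refine ⟨hkey, ?_⟩
    rw [GMW]
    -- GMW bound
    have hcp : (c ^ p) ^ (1 / p) = c := by
      rw [← Real.rpow_mul hcpos.le, mul_one_div_cancel hp0, Real.rpow_one]
    rcases lt_or_gt_of_ne hp0 with hneg | hposp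
    · -- p < 0
      have hsle : (1 / (n : ℝ)) * ∑ i, util A (fun _ _ => 1 / (n : ℝ)) i ^ p ≤ c ^ p := by
        have : ∑ i, util A (fun _ _ => 1 / (n : ℝ)) i ^ p ≤ ∑ _i : Fin n, c ^ p :=
          Finset.sum_le_sum fun i _ =>
            Real.rpow_le_rpow_of_nonpos hcpos (hkey i) hneg.le
        rw [Finset.sum_const, Finset.card_univ, Fintype.card_fin, nsmul_eq_mul] at this
        calc (1 / (n : ℝ)) * ∑ i, util A (fun _ _ => 1 / (n : ℝ)) i ^ p
            ≤ (1 / (n : ℝ)) * ((n : ℝ) * c ^ p) :=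
              mul_le_mul_of_nonneg_left this (by positivity)
          _ = c ^ p := by field_simp
      have hspos : 0 < (1 / (n : ℝ)) * ∑ i, util A (fun _ _ => 1 / (n : ℝ)) i ^ p := by
        apply mul_pos (by positivity)
        apply Finset.sum_pos (fun i _ => Real.rpow_pos_of_pos (lt_of_lt_of_le hcpos (hkey i)) p)
        exact Finset.univ_nonempty
      have := Real.rpow_le_rpow_of_nonpos hspos hsle (le_of_lt (one_div_neg.mpr hneg))
      rw [hcp] at this
      exact this
    · -- p > 0
      have hsge : c ^ p ≤ (1 / (n : ℝ)) * ∑ i, util A (fun _ _ => 1 / (n : ℝ)) i ^ p := by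
        have : ∑ _i : Fin n, c ^ p ≤ ∑ i, util A (fun _ _ => 1 / (n : ℝ)) i ^ p :=
          Finset.sum_le_sum fun i _ => Real.rpow_le_rpow hcpos.le (hkey i) hposp.le
        rw [Finset.sum_const, Finset.card_univ, Fintype.card_fin, nsmul_eq_mul] at this
        calc c ^ p = (1 / (n : ℝ)) * ((n : ℝ) * c ^ p) := by field_simp
          _ ≤ _ := mul_le_mul_of_nonneg_left this (by positivity)
      have := Real.rpow_le_rpow (by positivity) hsge (le_of_lt (one_div_pos.mpr hposp))
      rw [hcp] at this
      exact this
  · -- degenerate case: √(μ0 r) = 0, the bound is 0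
    have hz : Real.sqrt (μ0 * r) = 0 := Real.sqrt_eq_zero'.mpr (le_of_not_gt hpos)
    have hc0 : Real.sqrt m / ((n : ℝ) * Real.sqrt (μ0 * r)) = 0 := by
      rw [hz, mul_zero, div_zero]
    rw [hc0]
    refine ⟨fun i => hutil0 i, ?_⟩
    rw [GMW]
    apply Real.rpow_nonneg
    exact mul_nonneg (by positivity)
      (Finset.sum_nonneg fun i _ => Real.rpow_nonneg (hutil0 i) p)
end
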